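/- Let λ < 0 and let a, c, d be real numbers with c < 0 < a, d ≥ 0, satisfying 1 + λ² + a·c − c² = 0. Set ρ₁ = (√(4c(2c−a)+d²)+d)/2 and ρ₂ = (√(4c(2c−a)+d²)−d)/2, and define y : ℝ² → ℂ³ by y(v,w) = ( √((λ²+1)/((c−a)(2c−a)))·e^{i(c−a)v}, √((λ²+1)/(ρ₁(ρ₁+ρ₂)))·e^{−i(cv+ρ₁w)}, √((λ²+1)/(ρ₂(ρ₁+ρ₂)))·e^{−i(cv−ρ₂w)} ). Then at every point ⟨∂y/∂v, ∂y/∂v⟩_ℝ = ⟨∂y/∂w, ∂y/∂w⟩_ℝ = λ² + 1 and ⟨∂y/∂v, ∂y/∂w⟩_ℝ = 0; in particular the induced metric on ℝ² is a constant multiple of the Euclidean metric, hence flat. -/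

import Mathlib

open scoped ComplexInnerProductSpace

lemma hd_exp (A : ℝ) (J : ℂ) {f : ℝ → ℝ} {k v : ℝ} (hf : HasDerivAt f k v) :
    HasDerivAt (fun t : ℝ => (A : ℂ) * Complex.exp (J * ((f t : ℝ) : ℂ)))
      ((A : ℂ) * (J * (k : ℂ)) * Complex.exp (J * ((f v : ℝ) : ℂ))) v := by
  have h1 : HasDerivAt (fun t : ℝ => J * ((f t : ℝ) : ℂ)) (J * k) v :=
    hf.ofReal_comp.const_mul J
  have := (h1.cexp).const_mul (A : ℂ)
  refine this.congr_deriv ?_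
  ring

lemma conj_exp_mul (r : ℝ) (J : ℂ) (hJ : (starRingEnd ℂ) J = -J) :
    (starRingEnd ℂ) (Complex.exp (J * (r : ℂ))) * Complex.exp (J * (r : ℂ)) = 1 := by
  rw [← Complex.exp_conj, ← Complex.exp_add, map_mul, Complex.conj_ofReal, hJ]
  ring_nf
  exact Complex.exp_zero

lemma hd_vec {f g h : ℝ → ℂ} {f' g' h' : ℂ} {v : ℝ}
    (hf : HasDerivAt f f' v) (hg : HasDerivAt g g' v) (hh : HasDerivAt h h' v) :
    HasDerivAt (fun t => (WithLp.equiv 2 (Fin 3 → ℂ)).symm ![f t, g t, h t])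
      ((WithLp.equiv 2 (Fin 3 → ℂ)).symm ![f', g', h'] : EuclideanSpace ℂ (Fin 3)) v := by
  have hF : HasDerivAt (fun t => (![f t, g t, h t] : Fin 3 → ℂ)) ![f', g', h'] v := by
    rw [hasDerivAt_pi]
    intro i
    fin_cases i <;> simpa
  exact (((PiLp.continuousLinearEquiv 2 ℂ
    (fun _ : Fin 3 => ℂ)).symm.toContinuousLinearMap.restrictScalars
    ℝ).hasFDerivAt.comp_hasDerivAt v hF)

lemma inner3 (x z : Fin 3 → ℂ) :
    (⟪((WithLp.equiv 2 (Fin 3 → ℂ)).symm x : EuclideanSpace ℂ (Fin 3)),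
      (WithLp.equiv 2 (Fin 3 → ℂ)).symm z⟫ : ℂ)
      = (starRingEnd ℂ) (x 0) * z 0 + (starRingEnd ℂ) (x 1) * z 1
        + (starRingEnd ℂ) (x 2) * z 2 := by
  simp [PiLp.inner_apply, Fin.sum_univ_three, RCLike.inner_apply]
  ring

lemma term_helper (A A' x yy ε : ℝ) (J₁ J₂ E : ℂ)
    (hE : (starRingEnd ℂ) E * E = 1) (hJ : (starRingEnd ℂ) J₁ * J₂ = (ε : ℂ)) :
    (starRingEnd ℂ) ((A : ℂ) * (J₁ * (x : ℂ)) * E) * ((A' : ℂ) * (J₂ * (yy : ℂ)) * E)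
      = ((A * A' * (ε * x * yy) : ℝ) : ℂ) := by
  calc (starRingEnd ℂ) ((A : ℂ) * (J₁ * (x : ℂ)) * E) * ((A' : ℂ) * (J₂ * (yy : ℂ)) * E)
      = ((A : ℂ) * A' * x * yy) * (((starRingEnd ℂ) J₁ * J₂) * ((starRingEnd ℂ) E * E)) := by
        rw [map_mul, map_mul, map_mul, Complex.conj_ofReal, Complex.conj_ofReal]; ring
    _ = ((A * A' * (ε * x * yy) : ℝ) : ℂ) := by rw [hJ, hE]; push_cast; ring

theorem stmt_18 (lam a c d : ℝ) (hlam : lam < 0)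
    (hc : c < 0) (ha : 0 < a) (hd : 0 ≤ d)
    (hrel : 1 + lam^2 + a*c - c^2 = 0)
    (ρ₁ ρ₂ : ℝ)
    (hρ₁ : ρ₁ = (Real.sqrt (4*c*(2*c - a) + d^2) + d)/2)
    (hρ₂ : ρ₂ = (Real.sqrt (4*c*(2*c - a) + d^2) - d)/2)
    (y : ℝ → ℝ → EuclideanSpace ℂ (Fin 3))
    (hy : ∀ v w : ℝ, y v w = (WithLp.equiv 2 (Fin 3 → ℂ)).symm
      ![((Real.sqrt ((lam^2 + 1)/((c - a)*(2*c - a))) : ℝ) : ℂ)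
          * Complex.exp (Complex.I * (((c - a)*v : ℝ) : ℂ)),
        ((Real.sqrt ((lam^2 + 1)/(ρ₁*(ρ₁ + ρ₂))) : ℝ) : ℂ)
          * Complex.exp (-Complex.I * ((c*v + ρ₁*w : ℝ) : ℂ)),
        ((Real.sqrt ((lam^2 + 1)/(ρ₂*(ρ₁ + ρ₂))) : ℝ) : ℂ)
          * Complex.exp (-Complex.I * ((c*v - ρ₂*w : ℝ) : ℂ))]) :
    ∀ v w : ℝ,
      (⟪deriv (fun t => y t w) v, deriv (fun t => y t w) v⟫).re = lam^2 + 1 ∧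
      (⟪deriv (fun t => y v t) w, deriv (fun t => y v t) w⟫).re = lam^2 + 1 ∧
      (⟪deriv (fun t => y t w) v, deriv (fun t => y v t) w⟫).re = 0 := by
  intro v w
  -- real preliminaries
  set A : ℝ := Real.sqrt ((lam^2 + 1)/((c - a)*(2*c - a))) with hA
  set B : ℝ := Real.sqrt ((lam^2 + 1)/(ρ₁*(ρ₁ + ρ₂))) with hB
  set C : ℝ := Real.sqrt ((lam^2 + 1)/(ρ₂*(ρ₁ + ρ₂))) with hC
  have h2ca : 2*c - a < 0 := by linarith
  have hca : c - a < 0 := by linarith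
  have hlam1 : (0:ℝ) < lam^2 + 1 := by positivity
  have hs2 : 0 < 4*c*(2*c - a) + d^2 := by nlinarith
  set s : ℝ := Real.sqrt (4*c*(2*c - a) + d^2) with hsdef
  have hs : s^2 = 4*c*(2*c - a) + d^2 := Real.sq_sqrt hs2.le
  have hspos : 0 < s := Real.sqrt_pos.mpr hs2
  have hsum : ρ₁ + ρ₂ = s := by rw [hρ₁, hρ₂]; ring
  have hprod : ρ₁ * ρ₂ = c*(2*c - a) := by rw [hρ₁, hρ₂]; linear_combination hs / 4
  have hρ₁pos : 0 < ρ₁ := by rw [hρ₁]; linarith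
  have hρ₂pos : 0 < ρ₂ := by
    rw [hρ₂]
    nlinarith [hs, hspos]
  have hsumpos : 0 < ρ₁ + ρ₂ := by linarith
  have hA2 : A^2 = (lam^2 + 1)/((c - a)*(2*c - a)) :=
    Real.sq_sqrt (le_of_lt (div_pos hlam1 (mul_pos_of_neg_of_neg hca h2ca)))
  have hB2 : B^2 = (lam^2 + 1)/(ρ₁*(ρ₁ + ρ₂)) :=
    Real.sq_sqrt (le_of_lt (div_pos hlam1 (mul_pos hρ₁pos hsumpos)))
  have hC2 : C^2 = (lam^2 + 1)/(ρ₂*(ρ₁ + ρ₂)) :=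
    Real.sq_sqrt (le_of_lt (div_pos hlam1 (mul_pos hρ₂pos hsumpos)))
  have hcane : c - a ≠ 0 := ne_of_lt hca
  have h2cane : 2*c - a ≠ 0 := ne_of_lt h2ca
  have hcne : c ≠ 0 := ne_of_lt hc
  have hρ₁ne : ρ₁ ≠ 0 := ne_of_gt hρ₁pos
  have hρ₂ne : ρ₂ ≠ 0 := ne_of_gt hρ₂pos
  have hsumne : ρ₁ + ρ₂ ≠ 0 := ne_of_gt hsumpos
  have key1 : A^2*(c - a)^2 + B^2*c^2 + C^2*c^2 = lam^2 + 1 := by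
    rw [hA2, hB2, hC2]
    have hmid : (lam^2+1)/(ρ₁*(ρ₁+ρ₂))*c^2 + (lam^2+1)/(ρ₂*(ρ₁+ρ₂))*c^2
        = (lam^2+1)*c^2/(ρ₁*ρ₂) := by
      field_simp; ring
    rw [add_assoc, hmid, hprod]
    field_simp; rw [div_eq_one_iff_eq (by intro h; linarith)]; ring
  have key2 : B^2*ρ₁^2 + C^2*ρ₂^2 = lam^2 + 1 := by
    rw [hB2, hC2]; field_simp
  have key3 : B^2*(c*ρ₁) - C^2*(c*ρ₂) = 0 := by
    rw [hB2, hC2]; field_simp; ring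
  -- the exponentials
  set E1 : ℂ := Complex.exp (Complex.I * (((c - a)*v : ℝ) : ℂ)) with hE1def
  set E2 : ℂ := Complex.exp (-Complex.I * ((c*v + ρ₁*w : ℝ) : ℂ)) with hE2def
  set E3 : ℂ := Complex.exp (-Complex.I * ((c*v - ρ₂*w : ℝ) : ℂ)) with hE3def
  have hE1 : (starRingEnd ℂ) E1 * E1 = 1 := conj_exp_mul _ _ (by simp)
  have hE2 : (starRingEnd ℂ) E2 * E2 = 1 := conj_exp_mul _ _ (by simp)
  have hE3 : (starRingEnd ℂ) E3 * E3 = 1 := conj_exp_mul _ _ (by simp)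
  have hJ1 : (starRingEnd ℂ) Complex.I * Complex.I = ((1:ℝ) : ℂ) := by
    simp [Complex.conj_I]
  have hJ2 : (starRingEnd ℂ) (-Complex.I) * (-Complex.I) = ((1:ℝ) : ℂ) := by
    simp [Complex.conj_I]
  have hJ3 : (starRingEnd ℂ) (-Complex.I) * Complex.I = ((-1:ℝ) : ℂ) := by
    simp [Complex.conj_I]
  -- derivative in v
  have hdv1 : HasDerivAt (fun t : ℝ => (A : ℂ) * Complex.exp (Complex.I * (((c - a)*t : ℝ) : ℂ)))
      ((A : ℂ) * (Complex.I * ((c - a : ℝ) : ℂ)) * E1) v :=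
    hd_exp A Complex.I (by simpa using (hasDerivAt_id v).const_mul (c - a))
  have hdv2 : HasDerivAt (fun t : ℝ => (B : ℂ) * Complex.exp (-Complex.I * ((c*t + ρ₁*w : ℝ) : ℂ)))
      ((B : ℂ) * (-Complex.I * ((c : ℝ) : ℂ)) * E2) v :=
    hd_exp B (-Complex.I) (by simpa using ((hasDerivAt_id v).const_mul c).add_const (ρ₁*w))
  have hdv3 : HasDerivAt (fun t : ℝ => (C : ℂ) * Complex.exp (-Complex.I * ((c*t - ρ₂*w : ℝ) : ℂ)))
      ((C : ℂ) * (-Complex.I * ((c : ℝ) : ℂ)) * E3) v :=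
    hd_exp C (-Complex.I) (by simpa using ((hasDerivAt_id v).const_mul c).sub_const (ρ₂*w))
  have HDv : HasDerivAt (fun t => y t w)
      ((WithLp.equiv 2 (Fin 3 → ℂ)).symm
        ![(A : ℂ) * (Complex.I * ((c - a : ℝ) : ℂ)) * E1,
          (B : ℂ) * (-Complex.I * ((c : ℝ) : ℂ)) * E2,
          (C : ℂ) * (-Complex.I * ((c : ℝ) : ℂ)) * E3] : EuclideanSpace ℂ (Fin 3)) v := by
    rw [show (fun t => y t w) = _ from funext fun t => hy t w]
    exact hd_vec hdv1 hdv2 hdv3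
  -- derivative in w
  have hdw1 : HasDerivAt (fun _ : ℝ => (A : ℂ) * Complex.exp (Complex.I * (((c - a)*v : ℝ) : ℂ)))
      (0 : ℂ) w := hasDerivAt_const w _
  have hdw2 : HasDerivAt (fun t : ℝ => (B : ℂ) * Complex.exp (-Complex.I * ((c*v + ρ₁*t : ℝ) : ℂ)))
      ((B : ℂ) * (-Complex.I * ((ρ₁ : ℝ) : ℂ)) * E2) w :=
    hd_exp B (-Complex.I) (by simpa using ((hasDerivAt_id w).const_mul ρ₁).const_add (c*v))
  have hdw3 : HasDerivAt (fun t : ℝ => (C : ℂ) * Complex.exp (-Complex.I * ((c*v - ρ₂*t : ℝ) : ℂ)))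
      ((C : ℂ) * (-Complex.I * ((-ρ₂ : ℝ) : ℂ)) * E3) w :=
    hd_exp C (-Complex.I) (by simpa using HasDerivAt.const_sub (c*v) ((hasDerivAt_id w).const_mul ρ₂))
  have HDw : HasDerivAt (fun t => y v t)
      ((WithLp.equiv 2 (Fin 3 → ℂ)).symm
        ![(0 : ℂ),
          (B : ℂ) * (-Complex.I * ((ρ₁ : ℝ) : ℂ)) * E2,
          (C : ℂ) * (-Complex.I * ((-ρ₂ : ℝ) : ℂ)) * E3] : EuclideanSpace ℂ (Fin 3)) w := by
    rw [show (fun t => y v t) = _ from funext fun t => hy v t]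
    exact hd_vec hdw1 hdw2 hdw3
  rw [HDv.deriv, HDw.deriv]
  refine ⟨?_, ?_, ?_⟩
  · rw [inner3]
    simp only [Matrix.cons_val_zero, Matrix.cons_val_one, Matrix.head_cons,
      Matrix.cons_val_two, Matrix.tail_cons]
    rw [term_helper A A (c - a) (c - a) 1 _ _ _ hE1 hJ1,
      term_helper B B c c 1 _ _ _ hE2 hJ2,
      term_helper C C c c 1 _ _ _ hE3 hJ2,
      ← Complex.ofReal_add, ← Complex.ofReal_add, Complex.ofReal_re]
    linear_combination key1
  · rw [inner3]
    simp only [Matrix.cons_val_zero, Matrix.cons_val_one, Matrix.head_cons,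
      Matrix.cons_val_two, Matrix.tail_cons]
    rw [term_helper B B ρ₁ ρ₁ 1 _ _ _ hE2 hJ2,
      term_helper C C (-ρ₂) (-ρ₂) 1 _ _ _ hE3 hJ2]
    simp only [map_zero, zero_mul, mul_zero, zero_add]
    rw [← Complex.ofReal_add, Complex.ofReal_re]
    linear_combination key2
  · rw [inner3]
    simp only [Matrix.cons_val_zero, Matrix.cons_val_one, Matrix.head_cons,
      Matrix.cons_val_two, Matrix.tail_cons]
    rw [term_helper B B c ρ₁ 1 _ _ _ hE2 hJ2,
      term_helper C C c (-ρ₂) 1 _ _ _ hE3 hJ2]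
    simp only [mul_zero, zero_add]
    rw [← Complex.ofReal_add, Complex.ofReal_re]
    linear_combination key3
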